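/- Let π be a probability measure on ℝ with inf supp(π) < 0 < sup supp(π), and fix γ₂ > 0. Then the map γ₁ ↦ ∫ x dπ^{(γ₁,γ₂)}(x) (the mean of the tilted measure) is strictly increasing on ℝ. -/

import Mathlib

open MeasureTheory ProbabilityTheory Filter Set

/-- The (topological) support of a measure on `ℝ`: points all of whose neighborhoods
have positive measure. -/
def msupp (pr : MeasureTheory.Measure ℝ) : Set ℝ := {x : ℝ | ∀ U ∈ nhds x, pr U ≠ 0}

/-- The cumulant generating function `c(γ₁, γ₂) = log ∫ exp(γ₁ x - γ₂/2 x²) dπ(x)`. -/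
noncomputable def cgf (pr : MeasureTheory.Measure ℝ) (γ₁ γ₂ : ℝ) : ℝ :=
  Real.log (∫ x, Real.exp (γ₁ * x - γ₂ / 2 * x ^ 2) ∂pr)

/-- The exponentially tilted measure `π^{(γ₁, γ₂)}`, with density
`exp(γ₁ x - γ₂/2 x² - c(γ₁,γ₂))` with respect to `π`. -/
noncomputable def tilt (pr : MeasureTheory.Measure ℝ) (γ₁ γ₂ : ℝ) : MeasureTheory.Measure ℝ :=
  pr.withDensity fun x => ENNReal.ofReal (Real.exp (γ₁ * x - γ₂ / 2 * x ^ 2 - cgf pr γ₁ γ₂))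

/-- The mean of the tilted measure `π^{(γ₁, γ₂)}`. -/
noncomputable def tiltMean (pr : MeasureTheory.Measure ℝ) (γ₁ γ₂ : ℝ) : ℝ :=
  ∫ x, x ∂(tilt pr γ₁ γ₂)

namespace Stmt1Aux

/-- The unnormalized tilting density. -/
noncomputable def g (γ₂ a x : ℝ) : ℝ := Real.exp (a * x - γ₂ / 2 * x ^ 2)

lemma g_pos (γ₂ a x : ℝ) : 0 < g γ₂ a x := Real.exp_pos _

lemma gb {γ₂ : ℝ} (hγ₂ : 0 < γ₂) (a x : ℝ) : g γ₂ a x ≤ Real.exp (a ^ 2 / (2 * γ₂)) := by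
  apply Real.exp_le_exp.2
  rw [← sub_nonneg]
  have h : a ^ 2 / (2 * γ₂) - (a * x - γ₂ / 2 * x ^ 2) = (a - γ₂ * x) ^ 2 / (2 * γ₂) := by
    field_simp; ring
  rw [h]; positivity

lemma cont_g (γ₂ a : ℝ) : Continuous (g γ₂ a) := by unfold g; fun_prop

lemma int_g (pr : Measure ℝ) [IsProbabilityMeasure pr] {γ₂ : ℝ} (hγ₂ : 0 < γ₂) (a : ℝ) :
    Integrable (fun x => g γ₂ a x) pr := by
  refine Integrable.mono' (integrable_const (Real.exp (a ^ 2 / (2 * γ₂))))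
    (cont_g γ₂ a).aestronglyMeasurable (ae_of_all _ fun x => ?_)
  rw [Real.norm_eq_abs, abs_of_nonneg (g_pos γ₂ a x).le]
  exact gb hγ₂ a x

lemma abs_le_exp_add (x : ℝ) : |x| ≤ Real.exp x + Real.exp (-x) := by
  rcases abs_cases x with ⟨h, _⟩ | ⟨h, _⟩ <;> rw [h] <;>
    nlinarith [Real.add_one_le_exp x, Real.add_one_le_exp (-x), Real.exp_pos x, Real.exp_pos (-x)]

lemma xg_bound {γ₂ : ℝ} (hγ₂ : 0 < γ₂) (a x : ℝ) :
    |x * g γ₂ a x| ≤ Real.exp ((a + 1) ^ 2 / (2 * γ₂)) + Real.exp ((a - 1) ^ 2 / (2 * γ₂)) := by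
  rw [abs_mul, abs_of_nonneg (g_pos γ₂ a x).le]
  calc |x| * g γ₂ a x
      ≤ (Real.exp x + Real.exp (-x)) * g γ₂ a x :=
        mul_le_mul_of_nonneg_right (abs_le_exp_add x) (g_pos γ₂ a x).le
    _ = g γ₂ (a + 1) x + g γ₂ (a - 1) x := by
        unfold g; rw [add_mul, ← Real.exp_add, ← Real.exp_add]; ring_nf
    _ ≤ _ := add_le_add (gb hγ₂ (a + 1) x) (gb hγ₂ (a - 1) x)

lemma int_xg (pr : Measure ℝ) [IsProbabilityMeasure pr] {γ₂ : ℝ} (hγ₂ : 0 < γ₂) (a : ℝ) :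
    Integrable (fun x => x * g γ₂ a x) pr := by
  refine Integrable.mono' (integrable_const
    (Real.exp ((a + 1) ^ 2 / (2 * γ₂)) + Real.exp ((a - 1) ^ 2 / (2 * γ₂))))
    (continuous_id.mul (cont_g γ₂ a)).aestronglyMeasurable (ae_of_all _ fun x => ?_)
  rw [Real.norm_eq_abs]
  exact xg_bound hγ₂ a x

lemma Z_pos (pr : Measure ℝ) [IsProbabilityMeasure pr] {γ₂ : ℝ} (hγ₂ : 0 < γ₂) (a : ℝ) :
    0 < ∫ x, g γ₂ a x ∂pr := by
  rw [integral_pos_iff_support_of_nonneg (fun x => (g_pos γ₂ a x).le) (int_g pr hγ₂ a)]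
  have h : Function.support (fun x => g γ₂ a x) = Set.univ := by
    ext x; simp [g, Real.exp_ne_zero]
  rw [h]; simp

lemma tiltMean_eq (pr : Measure ℝ) [IsProbabilityMeasure pr] {γ₂ : ℝ} (hγ₂ : 0 < γ₂) (a : ℝ) :
    tiltMean pr a γ₂ = (∫ x, x * g γ₂ a x ∂pr) / (∫ x, g γ₂ a x ∂pr) := by
  have hZ : 0 < ∫ x, g γ₂ a x ∂pr := Z_pos pr hγ₂ a
  set Z := ∫ x, g γ₂ a x ∂pr with hZdef
  have hc : Real.exp (_root_.cgf pr a γ₂) = Z := by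
    show Real.exp (Real.log Z) = Z
    exact Real.exp_log hZ
  have hd : ∀ x : ℝ, Real.exp (a * x - γ₂ / 2 * x ^ 2 - _root_.cgf pr a γ₂) = g γ₂ a x / Z :=
    fun x => by rw [Real.exp_sub, hc]; rfl
  unfold tiltMean tilt
  simp_rw [hd]
  have hmeas : Measurable fun x : ℝ => Real.toNNReal (g γ₂ a x / Z) :=
    ((cont_g γ₂ a).div_const Z).measurable.real_toNNReal
  rw [show (fun x : ℝ => ENNReal.ofReal (g γ₂ a x / Z)) =
      (fun x : ℝ => ((Real.toNNReal (g γ₂ a x / Z) : NNReal) : ENNReal)) from rfl]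
  rw [integral_withDensity_eq_integral_smul hmeas]
  have hs : ∀ x : ℝ, Real.toNNReal (g γ₂ a x / Z) • x = (x * g γ₂ a x) / Z := fun x => by
    rw [NNReal.smul_def, Real.coe_toNNReal _ (div_nonneg (g_pos γ₂ a x).le hZ.le), smul_eq_mul]
    ring
  simp_rw [hs]
  rw [integral_div]

end Stmt1Aux

open Stmt1Aux

/-- for a probability measure `π` on `ℝ` with `inf supp(π) < 0 < sup supp(π)`
and `γ₂ > 0`, the map `γ₁ ↦ ∫ x dπ^{(γ₁,γ₂)}(x)` is strictly increasing on `ℝ`. -/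
theorem stmt1 (pr : Measure ℝ) [IsProbabilityMeasure pr]
    (hneg : ∃ x ∈ msupp pr, x < 0) (hpos : ∃ x ∈ msupp pr, 0 < x)
    (γ₂ : ℝ) (hγ₂ : 0 < γ₂) :
    StrictMono (fun γ₁ => tiltMean pr γ₁ γ₂) := by
  intro γ γ' hlt
  show tiltMean pr γ γ₂ < tiltMean pr γ' γ₂
  rw [tiltMean_eq pr hγ₂ γ, tiltMean_eq pr hγ₂ γ']
  have hZγ : 0 < ∫ x, g γ₂ γ x ∂pr := Z_pos pr hγ₂ γ
  have hZγ' : 0 < ∫ x, g γ₂ γ' x ∂pr := Z_pos pr hγ₂ γ'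
  rw [div_lt_div_iff₀ hZγ hZγ']
  set h : ℝ × ℝ → ℝ := fun p =>
    (p.1 - p.2) * (g γ₂ γ' p.1 * g γ₂ γ p.2 - g γ₂ γ p.1 * g γ₂ γ' p.2) with hh
  have hδ : 0 < γ' - γ := sub_pos.2 hlt
  have hfac : ∀ x : ℝ, g γ₂ γ' x = g γ₂ γ x * Real.exp ((γ' - γ) * x) := fun x => by
    unfold g; rw [← Real.exp_add]; ring_nf
  have hrw : ∀ p : ℝ × ℝ, h p = (g γ₂ γ p.1 * g γ₂ γ p.2) *
      ((p.1 - p.2) * (Real.exp ((γ' - γ) * p.1) - Real.exp ((γ' - γ) * p.2))) := by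
    intro p; simp only [hh]; rw [hfac p.1, hfac p.2]; ring
  have hnonneg : ∀ p : ℝ × ℝ, 0 ≤ h p := by
    intro p
    rw [hrw p]
    apply mul_nonneg (mul_nonneg (g_pos _ _ _).le (g_pos _ _ _).le)
    rcases le_total p.1 p.2 with hc | hc
    · have h1 : p.1 - p.2 ≤ 0 := sub_nonpos.2 hc
      have h2 : Real.exp ((γ' - γ) * p.1) - Real.exp ((γ' - γ) * p.2) ≤ 0 :=
        sub_nonpos.2 (Real.exp_le_exp.2 (mul_le_mul_of_nonneg_left hc hδ.le))
      have := mul_nonneg (neg_nonneg.2 h1) (neg_nonneg.2 h2)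
      rwa [neg_mul_neg] at this
    · exact mul_nonneg (sub_nonneg.2 hc)
        (sub_nonneg.2 (Real.exp_le_exp.2 (mul_le_mul_of_nonneg_left hc hδ.le)))
  have ixg := int_xg pr hγ₂
  have ig := int_g pr hγ₂
  have I1 : Integrable (fun p : ℝ × ℝ => p.1 * g γ₂ γ' p.1 * g γ₂ γ p.2) (pr.prod pr) :=
    (ixg γ').mul_prod (ig γ)
  have I2 : Integrable (fun p : ℝ × ℝ => p.1 * g γ₂ γ p.1 * g γ₂ γ' p.2) (pr.prod pr) :=
    (ixg γ).mul_prod (ig γ')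
  have I3 : Integrable (fun p : ℝ × ℝ => g γ₂ γ' p.1 * (p.2 * g γ₂ γ p.2)) (pr.prod pr) :=
    (ig γ').mul_prod (ixg γ)
  have I4 : Integrable (fun p : ℝ × ℝ => g γ₂ γ p.1 * (p.2 * g γ₂ γ' p.2)) (pr.prod pr) :=
    (ig γ).mul_prod (ixg γ')
  have I12 : Integrable (fun p : ℝ × ℝ =>
      p.1 * g γ₂ γ' p.1 * g γ₂ γ p.2 - p.1 * g γ₂ γ p.1 * g γ₂ γ' p.2) (pr.prod pr) := I1.sub I2
  have I34 : Integrable (fun p : ℝ × ℝ =>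
      g γ₂ γ' p.1 * (p.2 * g γ₂ γ p.2) - g γ₂ γ p.1 * (p.2 * g γ₂ γ' p.2)) (pr.prod pr) := I3.sub I4
  have hsplit : h = fun p : ℝ × ℝ =>
      (p.1 * g γ₂ γ' p.1 * g γ₂ γ p.2 - p.1 * g γ₂ γ p.1 * g γ₂ γ' p.2) -
      (g γ₂ γ' p.1 * (p.2 * g γ₂ γ p.2) - g γ₂ γ p.1 * (p.2 * g γ₂ γ' p.2)) := by
    funext p; simp only [hh]; ring
  have Ih : Integrable h (pr.prod pr) := by rw [hsplit]; exact I12.sub I34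
  have hval : ∫ p, h p ∂(pr.prod pr) =
      2 * ((∫ x, x * g γ₂ γ' x ∂pr) * (∫ x, g γ₂ γ x ∂pr)
        - (∫ x, x * g γ₂ γ x ∂pr) * (∫ x, g γ₂ γ' x ∂pr)) := by
    rw [hsplit, integral_sub I12 I34, integral_sub I1 I2, integral_sub I3 I4]
    rw [show (∫ p : ℝ × ℝ, p.1 * g γ₂ γ' p.1 * g γ₂ γ p.2 ∂(pr.prod pr)) =
        (∫ x, x * g γ₂ γ' x ∂pr) * (∫ x, g γ₂ γ x ∂pr) from
        integral_prod_mul (fun x => x * g γ₂ γ' x) (fun y => g γ₂ γ y)]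
    rw [show (∫ p : ℝ × ℝ, p.1 * g γ₂ γ p.1 * g γ₂ γ' p.2 ∂(pr.prod pr)) =
        (∫ x, x * g γ₂ γ x ∂pr) * (∫ x, g γ₂ γ' x ∂pr) from
        integral_prod_mul (fun x => x * g γ₂ γ x) (fun y => g γ₂ γ' y)]
    rw [show (∫ p : ℝ × ℝ, g γ₂ γ' p.1 * (p.2 * g γ₂ γ p.2) ∂(pr.prod pr)) =
        (∫ x, g γ₂ γ' x ∂pr) * (∫ x, x * g γ₂ γ x ∂pr) from
        integral_prod_mul (fun x => g γ₂ γ' x) (fun y => y * g γ₂ γ y)]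
    rw [show (∫ p : ℝ × ℝ, g γ₂ γ p.1 * (p.2 * g γ₂ γ' p.2) ∂(pr.prod pr)) =
        (∫ x, g γ₂ γ x ∂pr) * (∫ x, x * g γ₂ γ' x ∂pr) from
        integral_prod_mul (fun x => g γ₂ γ x) (fun y => y * g γ₂ γ' y)]
    ring
  have hposInt : 0 < ∫ p, h p ∂(pr.prod pr) := by
    rw [integral_pos_iff_support_of_nonneg hnonneg Ih]
    obtain ⟨av, ha, ha0⟩ := hneg
    obtain ⟨bv, hb, hb0⟩ := hpos
    have hIio : pr (Set.Iio 0) ≠ 0 := ha _ (Iio_mem_nhds ha0)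
    have hIoi : pr (Set.Ioi 0) ≠ 0 := hb _ (Ioi_mem_nhds hb0)
    have hsub : Set.Iio 0 ×ˢ Set.Ioi 0 ⊆ Function.support h := by
      rintro ⟨x, y⟩ ⟨hx, hy⟩
      have hxy : x < y := lt_trans hx hy
      have hxy2 : Real.exp ((γ' - γ) * x) < Real.exp ((γ' - γ) * y) :=
        Real.exp_lt_exp.2 (mul_lt_mul_of_pos_left hxy hδ)
      have hpos2 : 0 < h (x, y) := by
        rw [hrw (x, y)]
        exact mul_pos (mul_pos (g_pos _ _ _) (g_pos _ _ _))
          (mul_pos_of_neg_of_neg (sub_neg.2 hxy) (sub_neg.2 hxy2))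
      exact ne_of_gt hpos2
    calc (0 : ENNReal) < pr.prod pr (Set.Iio 0 ×ˢ Set.Ioi 0) := by
          rw [Measure.prod_prod]
          exact ENNReal.mul_pos hIio hIoi
      _ ≤ pr.prod pr (Function.support h) := measure_mono hsub
  rw [hval] at hposInt
  linarith
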